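/- Under the interference-limited lower-bound model, the femto-user coverage probability satisfies P_f^c(γ_f, θ_tilt, R_c) ≥ C₀ e^{-πλ_m R_c²}, where C₀ = (α_N/(α_L R_f² (C₁+C₂)^{α_N/α_L})) γ(α_N/α_L, (C₁+C₂) R_f^{2α_L/α_N}), with C₁, C₂ > 0 the closed-form interference constants; in particular the bound is strictly decreasing in R_c. -/

import Mathlib

open Real MeasureTheory

/-- Lower incomplete gamma function `γ(a, x) = ∫_0^x t^(a-1) e^(-t) dt`. -/
noncomputable def lowerIncGamma (a x : ℝ) : ℝ :=
  ∫ t in (0:ℝ)..x, t ^ (a - 1) * Real.exp (-t)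

lemma keyGamma {C β R : ℝ} (hC : 0 < C) (hβ : 0 < β) (hR : 0 < R) :
    lowerIncGamma (2/β) (C * R ^ β) =
      (β * C ^ (2/β)) * ∫ x in Set.Ioc (0:ℝ) R, x * Real.exp (-(C * x ^ β)) := by
  have hX : 0 < C * R ^ β := mul_pos hC (rpow_pos_of_pos hR β)
  set a : ℝ := 2/β with ha
  set X : ℝ := C * R ^ β with hXd
  set φ : ℝ → ℝ := fun t => t ^ (a-1) * Real.exp (-t) with hφ
  set g : ℝ → ℝ := (Set.Ioc (0:ℝ) X).indicator φ with hg
  have hγ : lowerIncGamma a X = ∫ t in Set.Ioc (0:ℝ) X, φ t := by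
    rw [lowerIncGamma, intervalIntegral.integral_of_le hX.le]
  have hIoi : ∫ t in Set.Ioi (0:ℝ), g t = ∫ t in Set.Ioc (0:ℝ) X, φ t := by
    rw [hg, MeasureTheory.setIntegral_indicator measurableSet_Ioc,
      Set.inter_eq_right.mpr Set.Ioc_subset_Ioi_self]
  have hscale : ∫ y in Set.Ioi (0:ℝ), g (C * y) = C⁻¹ • ∫ y in Set.Ioi (0:ℝ), g y := by
    have := MeasureTheory.integral_comp_mul_left_Ioi g 0 hC
    rwa [mul_zero] at this
  have hrpow : ∫ x in Set.Ioi (0:ℝ), (|β| * x ^ (β-1)) • g (C * x ^ β)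
      = ∫ y in Set.Ioi (0:ℝ), g (C * y) :=
    MeasureTheory.integral_comp_rpow_Ioi (fun y => g (C * y)) hβ.ne'
  have hLHS : ∫ x in Set.Ioi (0:ℝ), (|β| * x ^ (β-1)) • g (C * x ^ β)
      = ∫ x in Set.Ioc (0:ℝ) R, (β * C ^ (a-1)) * (x * Real.exp (-(C * x ^ β))) := by
    rw [MeasureTheory.setIntegral_congr_fun measurableSet_Ioi
      (g := fun x => (Set.Ioc (0:ℝ) R).indicator
        (fun x => (β * C ^ (a-1)) * (x * Real.exp (-(C * x ^ β)))) x) ?_,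
      MeasureTheory.setIntegral_indicator measurableSet_Ioc,
      Set.inter_eq_right.mpr Set.Ioc_subset_Ioi_self]
    intro x hx
    have hx0 : (0:ℝ) < x := hx
    simp only [hg]
    by_cases hxR : x ≤ R
    · have hmem : C * x ^ β ∈ Set.Ioc (0:ℝ) X :=
        ⟨mul_pos hC (rpow_pos_of_pos hx0 β), by
          rw [hXd]
          exact mul_le_mul_of_nonneg_left (rpow_le_rpow hx0.le hxR hβ.le) hC.le⟩
      rw [Set.indicator_of_mem hmem, Set.indicator_of_mem (Set.mem_Ioc.mpr ⟨hx0, hxR⟩)]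
      simp only [hφ, smul_eq_mul]
      have h1 : (C * x ^ β) ^ (a-1) = C ^ (a-1) * x ^ (2 - β) := by
        rw [Real.mul_rpow hC.le (rpow_nonneg hx0.le β), ← Real.rpow_mul hx0.le]
        congr 1
        rw [ha]
        field_simp
      have h2 : x ^ (β-1) * x ^ (2-β) = x := by
        rw [← Real.rpow_add hx0]
        norm_num
      rw [h1, abs_of_pos hβ]
      calc β * x ^ (β-1) * (C ^ (a-1) * x ^ (2-β) * Real.exp (-(C * x ^ β)))
          = β * C ^ (a-1) * ((x ^ (β-1) * x ^ (2-β)) * Real.exp (-(C * x ^ β))) := by ring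
        _ = β * C ^ (a-1) * (x * Real.exp (-(C * x ^ β))) := by rw [h2]
    · have hnm : C * x ^ β ∉ Set.Ioc (0:ℝ) X := by
        intro hmem
        apply hxR
        have : x ^ β ≤ R ^ β := le_of_mul_le_mul_left (hmem.2.trans_eq hXd) hC
        exact (Real.rpow_le_rpow_iff hx0.le hR.le hβ).mp this
      rw [Set.indicator_of_notMem hnm, Set.indicator_of_notMem
        (fun h => hxR (Set.mem_Ioc.mp h).2), smul_zero]
  have hconst : ∫ x in Set.Ioc (0:ℝ) R, (β * C ^ (a-1)) * (x * Real.exp (-(C * x ^ β)))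
      = (β * C ^ (a-1)) * ∫ x in Set.Ioc (0:ℝ) R, x * Real.exp (-(C * x ^ β)) :=
    MeasureTheory.integral_const_mul _ _
  have hCpow : C * (β * C ^ (a-1)) = β * C ^ a := by
    rw [Real.rpow_sub hC, Real.rpow_one]
    field_simp
  have : (β * C ^ (a-1)) * ∫ x in Set.Ioc (0:ℝ) R, x * Real.exp (-(C * x ^ β))
      = C⁻¹ * lowerIncGamma a X := by
    rw [← hconst, ← hLHS, hrpow, hscale, smul_eq_mul, hIoi, hγ]
  have hfin := congrArg (fun z => C * z) this
  rw [← mul_assoc, hCpow, ← mul_assoc, mul_inv_cancel₀ hC.ne', one_mul] at hfin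
  exact hfin.symm

/-- Femto-user coverage lower bound `P_f^c ≥ C₀ e^{-π λ_m R_c²}` in the
interference-limited regime, and the bound is strictly decreasing in `R_c`. -/
theorem stmt_12 (lam_m C₁ C₂ R_f αL αN : ℝ)
    (hlam : 0 < lam_m) (h1 : 0 < C₁) (h2 : 0 < C₂) (hRf : 0 < R_f)
    (hαL : 0 < αL) (hαN : 0 < αN)
    (L₁ L₂ : ℝ → ℝ)
    (hL₁ : ∀ ρ ∈ Set.Icc 0 R_f, Real.exp (-(C₁ * ρ ^ (2 * αL / αN))) ≤ L₁ ρ)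
    (hL₂ : ∀ ρ ∈ Set.Icc 0 R_f, Real.exp (-(C₂ * ρ ^ (2 * αL / αN))) ≤ L₂ ρ)
    (hint : IntervalIntegrable (fun ρ => L₁ ρ * L₂ ρ * (2 * ρ / R_f ^ 2))
      volume 0 R_f)
    (Pc : ℝ → ℝ)
    (hPc : ∀ R_c, Pc R_c = Real.exp (-(π * lam_m * R_c ^ 2)) *
      ∫ ρ in (0:ℝ)..R_f, L₁ ρ * L₂ ρ * (2 * ρ / R_f ^ 2))
    (C₀ : ℝ)
    (hC₀ : C₀ = (αN / (αL * R_f ^ 2 * (C₁ + C₂) ^ (αN / αL))) *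
      lowerIncGamma (αN / αL) ((C₁ + C₂) * R_f ^ (2 * αL / αN))) :
    (∀ R_c, 0 ≤ R_c → C₀ * Real.exp (-(π * lam_m * R_c ^ 2)) ≤ Pc R_c) ∧
      StrictAntiOn (fun R_c => C₀ * Real.exp (-(π * lam_m * R_c ^ 2))) (Set.Ici 0) := by
  set C : ℝ := C₁ + C₂ with hCdef
  have hC : 0 < C := by positivity
  set β : ℝ := 2 * αL / αN with hβdef
  have hβ : 0 < β := by positivity
  have e1 : αN / αL = 2 / β := by
    rw [hβdef]
    field_simp
  have hkey := keyGamma hC hβ hRf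
  set I : ℝ := ∫ x in Set.Ioc (0:ℝ) R_f, x * Real.exp (-(C * x ^ β)) with hIdef
  -- continuity of the substituted integrand
  have hrp : Continuous (fun ρ : ℝ => ρ ^ β) := by
    rw [continuous_iff_continuousAt]
    intro x
    exact Real.continuousAt_rpow_const x β (Or.inr hβ.le)
  have hcont : Continuous (fun ρ : ℝ => ρ * Real.exp (-(C * ρ ^ β))) :=
    continuous_id.mul (Real.continuous_exp.comp (continuous_const.mul hrp).neg)
  have hJI : I = ∫ ρ in (0:ℝ)..R_f, ρ * Real.exp (-(C * ρ ^ β)) :=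
    (intervalIntegral.integral_of_le hRf.le).symm
  have hIpos : 0 < I := by
    rw [hJI]
    apply intervalIntegral.intervalIntegral_pos_of_pos_on (hcont.intervalIntegrable _ _) _ hRf
    intro x hx
    exact mul_pos hx.1 (Real.exp_pos _)
  have hC0' : C₀ = 2 / R_f ^ 2 * I := by
    rw [hC₀, e1, hkey]
    have hne : (C:ℝ) ^ (2/β) ≠ 0 := (Real.rpow_pos_of_pos hC _).ne'
    have hcoef : αN / (αL * R_f ^ 2 * C ^ (2/β)) * (β * C ^ (2/β)) = 2 / R_f ^ 2 := by
      have hβval : β * αN = 2 * αL := by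
        rw [hβdef]
        field_simp
      rw [div_mul_eq_mul_div, div_eq_div_iff (mul_ne_zero (by positivity) hne) (by positivity)]
      linear_combination (C ^ (2/β) * R_f ^ 2) * hβval
    calc αN / (αL * R_f ^ 2 * C ^ (2/β)) * (β * C ^ (2/β) * I)
        = (αN / (αL * R_f ^ 2 * C ^ (2/β)) * (β * C ^ (2/β))) * I := by ring
      _ = 2 / R_f ^ 2 * I := by rw [hcoef]
  have hC0pos : 0 < C₀ := by
    rw [hC0']
    positivity
  -- C₀ as an interval integral of the explicit lower-bound integrand
  have hC0int : C₀ = ∫ ρ in (0:ℝ)..R_f, Real.exp (-(C * ρ ^ β)) * (2 * ρ / R_f ^ 2) := by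
    rw [hC0', hJI, ← intervalIntegral.integral_const_mul]
    apply intervalIntegral.integral_congr
    intro ρ _
    dsimp
    ring
  have hlow_cont : Continuous (fun ρ : ℝ => Real.exp (-(C * ρ ^ β)) * (2 * ρ / R_f ^ 2)) :=
    (Real.continuous_exp.comp (continuous_const.mul hrp).neg).mul
      ((continuous_const.mul continuous_id).div_const _)
  have hle : C₀ ≤ ∫ ρ in (0:ℝ)..R_f, L₁ ρ * L₂ ρ * (2 * ρ / R_f ^ 2) := by
    rw [hC0int]
    apply intervalIntegral.integral_mono_on hRf.le (hlow_cont.intervalIntegrable _ _) hint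
    intro ρ hρ
    have h2ρ : 0 ≤ 2 * ρ / R_f ^ 2 := by
      have := hρ.1
      positivity
    have hsplit : Real.exp (-(C * ρ ^ β)) =
        Real.exp (-(C₁ * ρ ^ β)) * Real.exp (-(C₂ * ρ ^ β)) := by
      rw [← Real.exp_add]
      congr 1
      rw [hCdef]
      ring
    rw [hsplit]
    exact mul_le_mul_of_nonneg_right
      (mul_le_mul (hL₁ ρ hρ) (hL₂ ρ hρ) (Real.exp_pos _).le
        ((Real.exp_pos _).le.trans (hL₁ ρ hρ))) h2ρ
  constructor
  · intro R_c _
    rw [hPc R_c]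
    calc C₀ * Real.exp (-(π * lam_m * R_c ^ 2))
        ≤ (∫ ρ in (0:ℝ)..R_f, L₁ ρ * L₂ ρ * (2 * ρ / R_f ^ 2)) *
            Real.exp (-(π * lam_m * R_c ^ 2)) :=
          mul_le_mul_of_nonneg_right hle (Real.exp_pos _).le
      _ = _ := mul_comm _ _
  · intro x hx y hy hxy
    dsimp only
    have hsq : x ^ 2 < y ^ 2 := by nlinarith [Set.mem_Ici.mp hx]
    have hexp : Real.exp (-(π * lam_m * y ^ 2)) < Real.exp (-(π * lam_m * x ^ 2)) := by
      apply Real.exp_lt_exp.mpr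
      have hpl : 0 < π * lam_m := by positivity
      nlinarith
    exact mul_lt_mul_of_pos_left hexp hC0pos
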